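/- If every k-transitive tournament has a dominating set of size at most p, then every k-transitive tournament has an enclosure set of size at most 2^k · p. -/
import Mathlib


/-- If every `k`-transitive tournament has a dominating set of size at most `p`,
then every `k`-transitive tournament has an enclosure set of size at most `2^k * p`. -/
theorem stmt3 (k p : ℕ)
    (Hdom : ∀ (V : Type) [Fintype V] [DecidableEq V] (T : V → V → Prop),
      (∀ v, ¬ T v v) → (∀ x y, x ≠ y → T x y ∨ T y x) →
      (∀ x y, T x y → ¬ T y x) →
      ∀ col : V → V → Fin k, (∀ x y, col x y = col y x) →
      (∀ a b c, T a b → T b c → col a b = col b c → T a c ∧ col a c = col a b) →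
      ∃ S : Finset V, S.card ≤ p ∧ ∀ v ∉ S, ∃ w ∈ S, T w v) :
    ∀ (V : Type) [Fintype V] [DecidableEq V] (T : V → V → Prop),
      (∀ v, ¬ T v v) → (∀ x y, x ≠ y → T x y ∨ T y x) →
      (∀ x y, T x y → ¬ T y x) →
      ∀ col : V → V → Fin k, (∀ x y, col x y = col y x) →
      (∀ a b c, T a b → T b c → col a b = col b c → T a c ∧ col a c = col a b) →
      ∃ S : Finset V, S.card ≤ 2 ^ k * p ∧ ∀ v ∉ S, ∃ (i : Fin k) (a c : V),
        a ∈ S ∧ c ∈ S ∧ T a v ∧ T v c ∧ col a v = i ∧ col v c = i := by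
  intro V _ _ T hirr htot hasym col hsym htr
  classical
  -- scrambled tournament for each color set I
  set scr : Finset (Fin k) → V → V → Prop :=
    fun I x y => if col x y ∈ I then T y x else T x y with hscr
  have key : ∀ I : Finset (Fin k),
      ∃ S : Finset V, S.card ≤ p ∧ ∀ v ∉ S, ∃ w ∈ S, scr I w v := by
    intro I
    refine Hdom V (scr I) ?_ ?_ ?_ col hsym ?_
    · intro v; simp only [hscr]; split_ifs <;> exact hirr v
    · intro x y hxy
      simp only [hscr]
      rw [hsym y x]
      split_ifs with h
      · exact (htot x y hxy).symm
      · exact htot x y hxy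
    · intro x y
      simp only [hscr]
      rw [hsym y x]
      split_ifs with h
      · exact hasym y x
      · exact hasym x y
    · intro a b c hab hbc hcol
      simp only [hscr] at hab hbc ⊢
      by_cases hI : col a b ∈ I
      · rw [if_pos hI] at hab
        rw [if_pos (hcol ▸ hI)] at hbc
        have hcb : col c b = col b a := by rw [hsym c b, hsym b a, hcol]
        obtain ⟨hca, hcolca⟩ := htr c b a hbc hab hcb
        have hac : col a c = col a b := by
          rw [hsym a c, hcolca, hsym c b, hcol]
        rw [if_pos (hac ▸ hI)]
        exact ⟨hca, hac⟩
      · rw [if_neg hI] at hab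
        rw [if_neg (hcol ▸ hI)] at hbc
        obtain ⟨hac, hcolac⟩ := htr a b c hab hbc hcol
        rw [if_neg (hcolac ▸ hI)]
        exact ⟨hac, hcolac⟩
  choose f hf1 hf2 using key
  refine ⟨Finset.univ.biUnion f, ?_, ?_⟩
  · calc (Finset.univ.biUnion f).card ≤ ∑ I : Finset (Fin k), (f I).card :=
          Finset.card_biUnion_le
      _ ≤ ∑ _I : Finset (Fin k), p := Finset.sum_le_sum fun I _ => hf1 I
      _ = 2 ^ k * p := by
          simp [Finset.sum_const, Finset.card_univ, Fintype.card_finset, mul_comm]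
  · intro v hv
    by_contra hcon
    push_neg at hcon
    set S : Finset V := Finset.univ.biUnion f with hS
    set I : Finset (Fin k) :=
      Finset.univ.filter (fun i => ∃ a ∈ S, T a v ∧ col a v = i) with hI
    have hsub : f I ⊆ S := fun x hx => Finset.mem_biUnion.2 ⟨I, Finset.mem_univ I, hx⟩
    obtain ⟨w, hw, hwv⟩ := hf2 I v (fun h => hv (hsub h))
    simp only [hscr] at hwv
    by_cases hmem : col w v ∈ I
    · rw [if_pos hmem] at hwv
      obtain ⟨a, ha, hav, hcolav⟩ := (Finset.mem_filter.1 hmem).2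
      exact hcon (col w v) a w ha (hsub hw) hav hwv hcolav (hsym v w)
    · rw [if_neg hmem] at hwv
      exact hmem (Finset.mem_filter.2 ⟨Finset.mem_univ _, w, hsub hw, hwv, rfl⟩)
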